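/- For each n ≥ 1 and each k ∈ [n], the Stirling number of the second kind S(n,k) equals the number of inversion sequences e ∈ I_n such that |e|_0 = k and |e|_j ∈ {0,1} for every 1 ≤ j ≤ n-1. -/

import Mathlib

open scoped Classical

/-- Stirling numbers of the second kind. -/
def stirling2 : ℕ → ℕ → ℕ
  | 0, 0 => 1
  | 0, _ + 1 => 0
  | _ + 1, 0 => 0
  | n + 1, k + 1 => (k + 1) * stirling2 n (k + 1) + stirling2 n k

/-- `cnt e j = |e|_j`, the number of entries of the inversion sequence `e` equal to `j`. -/
def cnt {n : ℕ} (e : (i : Fin n) → Fin ((i : ℕ) + 1)) (j : ℕ) : ℕ :=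
  (Finset.univ.filter (fun i : Fin n => ((e i : ℕ) = j))).card

noncomputable def G (n k : ℕ) : ℕ :=
  (Finset.univ.filter (fun e : (i : Fin n) → Fin ((i : ℕ) + 1) =>
    cnt e 0 = k ∧ ∀ j, 1 ≤ j → cnt e j ≤ 1)).card

lemma cnt_eq_sum {n : ℕ} (e : (i : Fin n) → Fin ((i : ℕ) + 1)) (j : ℕ) :
    cnt e j = ∑ i : Fin n, if (e i : ℕ) = j then 1 else 0 := Finset.card_filter _ _

lemma cnt_snoc {n : ℕ} (e : (i : Fin n) → Fin ((i : ℕ) + 1)) (x : Fin (n + 1)) (j : ℕ) :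
    cnt (Fin.snoc (α := fun i : Fin (n+1) => Fin ((i : ℕ) + 1)) e x) j
      = cnt e j + if (x : ℕ) = j then 1 else 0 := by
  rw [cnt_eq_sum, cnt_eq_sum, Fin.sum_univ_castSucc]
  simp

lemma cnt_of_ge {n : ℕ} (e : (i : Fin n) → Fin ((i : ℕ) + 1)) (j : ℕ) (hj : n ≤ j) :
    cnt e j = 0 := by
  rw [cnt, Finset.card_eq_zero, Finset.filter_eq_empty_iff]
  intro i _
  have := (e i).isLt
  have := i.isLt
  omega

lemma sum_cnt {n : ℕ} (e : (i : Fin n) → Fin ((i : ℕ) + 1)) :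
    ∑ j ∈ Finset.range (n + 1), cnt e j = n := by
  have := Finset.card_eq_sum_card_fiberwise (s := (Finset.univ : Finset (Fin n)))
    (t := Finset.range (n + 1)) (f := fun i => ((e i : ℕ)))
    (by intro i _; simp only [Finset.mem_coe, Finset.mem_range]; have := (e i).isLt; have := i.isLt; omega)
  simpa [cnt] using this.symm

lemma cnt_zero_add {n : ℕ} (e : (i : Fin n) → Fin ((i : ℕ) + 1)) :
    cnt e 0 + ∑ j ∈ (Finset.range (n + 1)).erase 0, cnt e j = n := by
  rw [Finset.add_sum_erase _ _ (by simp), sum_cnt]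

lemma card_unused {n k : ℕ} (e : (i : Fin n) → Fin ((i : ℕ) + 1))
    (h0 : cnt e 0 = k) (hQ : ∀ j, 1 ≤ j → cnt e j ≤ 1) :
    (((Finset.range (n + 1)).erase 0).filter (fun j => cnt e j = 0)).card = k := by
  set B := (Finset.range (n + 1)).erase 0 with hB
  have hsum : k + ∑ j ∈ B, cnt e j = n := by
    have := cnt_zero_add e; rw [h0] at this; exact this
  have hcnt1 : ∀ j ∈ B, 1 ≤ j := by intro j hj; simp [hB] at hj; omega
  have : ∑ j ∈ B, cnt e j = (B.filter (fun j => ¬ cnt e j = 0)).card := by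
    rw [Finset.card_filter]
    apply Finset.sum_congr rfl
    intro j hj
    have := hQ j (hcnt1 j hj)
    split <;> omega
  have hsplit := Finset.card_filter_add_card_filter_not
    (s := B) (p := fun j => cnt e j = 0)
  have hBcard : B.card = n := by simp [hB]
  omega

lemma inner_card {n k : ℕ} (e : (i : Fin n) → Fin ((i : ℕ) + 1)) :
    (Finset.univ.filter (fun x : Fin (n+1) =>
      cnt (Fin.snoc (α := fun i : Fin (n+1) => Fin ((i : ℕ) + 1)) e x) 0 = k ∧
      ∀ j, 1 ≤ j → cnt (Fin.snoc (α := fun i : Fin (n+1) => Fin ((i : ℕ) + 1)) e x) j ≤ 1)).card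
    = (if cnt e 0 = k ∧ (∀ j, 1 ≤ j → cnt e j ≤ 1) then k else 0)
      + (if cnt e 0 + 1 = k ∧ (∀ j, 1 ≤ j → cnt e j ≤ 1) then 1 else 0) := by
  by_cases hQ : ∀ j, 1 ≤ j → cnt e j ≤ 1
  · by_cases h0 : cnt e 0 = k
    · rw [if_pos ⟨h0, hQ⟩, if_neg (by omega), add_zero]
      refine Eq.trans ?_ (card_unused e h0 hQ)
      refine Finset.card_bij (fun x _ => (x : ℕ)) ?_ ?_ ?_
      · intro x hx
        simp only [Finset.mem_filter, Finset.mem_univ, true_and, cnt_snoc] at hx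
        obtain ⟨hx0, hx1⟩ := hx
        have hxne : (x : ℕ) ≠ 0 := by intro h; rw [h] at hx0; simp at hx0; omega
        have hxz : cnt e (x : ℕ) = 0 := by
          have := hx1 (x : ℕ) (by omega)
          simp at this; omega
        simp only [Finset.mem_filter, Finset.mem_erase, Finset.mem_range]
        exact ⟨⟨hxne, x.isLt⟩, hxz⟩
      · intro x hx y hy h; exact Fin.ext h
      · intro j hj
        simp only [Finset.mem_filter, Finset.mem_erase, Finset.mem_range] at hj
        obtain ⟨⟨hj0, hjn⟩, hjz⟩ := hj
        refine ⟨⟨j, hjn⟩, ?_, rfl⟩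
        simp only [Finset.mem_filter, Finset.mem_univ, true_and, cnt_snoc]
        constructor
        · rw [if_neg hj0, add_zero, h0]
        · intro j' hj'
          have := hQ j' hj'
          split
          · next h => subst h; omega
          · omega
    · by_cases h1 : cnt e 0 + 1 = k
      · rw [if_neg (by tauto), if_pos ⟨h1, hQ⟩, zero_add, Finset.card_eq_one]
        refine ⟨0, ?_⟩
        ext x
        simp only [Finset.mem_filter, Finset.mem_univ, true_and, Finset.mem_singleton, cnt_snoc]
        constructor
        · rintro ⟨hx0, -⟩
          by_contra hne
          have : (x : ℕ) ≠ 0 := fun h => hne (Fin.ext h)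
          rw [if_neg this] at hx0; omega
        · rintro rfl
          refine ⟨by simp [h1], ?_⟩
          intro j hj
          have := hQ j hj
          have : ((0 : Fin (n+1)) : ℕ) ≠ j := by simp; omega
          rw [if_neg this]; omega
      · rw [if_neg (by tauto), if_neg (by tauto)]
        rw [Finset.card_eq_zero, Finset.filter_eq_empty_iff]
        intro x _
        rintro ⟨hx0, -⟩
        rw [cnt_snoc] at hx0
        split at hx0 <;> omega
  · rw [if_neg (by tauto), if_neg (by tauto)]
    rw [Finset.card_eq_zero, Finset.filter_eq_empty_iff]
    intro x _
    rintro ⟨-, hx1⟩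
    apply hQ
    intro j hj
    have := hx1 j hj
    rw [cnt_snoc] at this
    omega

lemma G_succ_succ (n m : ℕ) : G (n + 1) (m + 1) = (m + 1) * G n (m + 1) + G n m := by
  classical
  rw [G, Finset.card_filter]
  rw [← Equiv.sum_comp (Fin.snocEquiv (fun i : Fin (n+1) => Fin ((i : ℕ) + 1)))
      (fun f => if cnt f 0 = m + 1 ∧ ∀ j, 1 ≤ j → cnt f j ≤ 1 then 1 else 0)]
  rw [Fintype.sum_prod_type, Finset.sum_comm]
  have h2 : ∀ e : (i : Fin n) → Fin ((i : ℕ) + 1),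
      (∑ x : Fin (n + 1),
        if cnt (Fin.snoc (α := fun i : Fin (n+1) => Fin ((i : ℕ) + 1)) e x) 0 = m + 1 ∧
            ∀ j, 1 ≤ j → cnt (Fin.snoc (α := fun i : Fin (n+1) => Fin ((i : ℕ) + 1)) e x) j ≤ 1
        then 1 else 0)
      = (if cnt e 0 = m + 1 ∧ (∀ j, 1 ≤ j → cnt e j ≤ 1) then m + 1 else 0)
        + (if cnt e 0 = m ∧ (∀ j, 1 ≤ j → cnt e j ≤ 1) then 1 else 0) := by
    intro e
    rw [← Finset.card_filter, inner_card]
    congr 1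
    simp only [Nat.add_right_cancel_iff]
  calc (∑ e : (i : Fin n) → Fin ((i : ℕ) + 1), ∑ x : Fin (n + 1),
        if cnt (Fin.snoc (α := fun i : Fin (n+1) => Fin ((i : ℕ) + 1)) e x) 0 = m + 1 ∧
            ∀ j, 1 ≤ j → cnt (Fin.snoc (α := fun i : Fin (n+1) => Fin ((i : ℕ) + 1)) e x) j ≤ 1
        then 1 else 0)
      = ∑ e : (i : Fin n) → Fin ((i : ℕ) + 1),
        ((if cnt e 0 = m + 1 ∧ (∀ j, 1 ≤ j → cnt e j ≤ 1) then m + 1 else 0)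
          + (if cnt e 0 = m ∧ (∀ j, 1 ≤ j → cnt e j ≤ 1) then 1 else 0)) := by
        exact Finset.sum_congr rfl (fun e _ => h2 e)
    _ = (m + 1) * G n (m + 1) + G n m := by
        rw [Finset.sum_add_distrib, ← Finset.sum_filter, ← Finset.sum_filter]
        simp [G, mul_comm]

lemma G_zero (k : ℕ) : G 0 k = if k = 0 then 1 else 0 := by
  rcases Nat.eq_zero_or_pos k with rfl | hk
  · rw [if_pos rfl, G]
    have : (Finset.univ.filter (fun e : (i : Fin 0) → Fin ((i : ℕ) + 1) =>
        cnt e 0 = 0 ∧ ∀ j, 1 ≤ j → cnt e j ≤ 1)) = Finset.univ := by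
      apply Finset.filter_true_of_mem
      intro e _
      exact ⟨cnt_of_ge e 0 le_rfl, fun j _ => by rw [cnt_of_ge e j (Nat.zero_le j)]; omega⟩
    rw [this, Finset.card_univ]
    simp
  · rw [if_neg (by omega), G, Finset.card_eq_zero, Finset.filter_eq_empty_iff]
    intro e _
    rintro ⟨h0, -⟩
    rw [cnt_of_ge e 0 le_rfl] at h0
    omega

lemma G_succ_zero (n : ℕ) : G (n + 1) 0 = 0 := by
  rw [G, Finset.card_eq_zero, Finset.filter_eq_empty_iff]
  intro e _
  rintro ⟨h0, -⟩
  have : (0 : Fin (n + 1)) ∈ Finset.univ.filter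
      (fun i : Fin (n + 1) => ((e i : ℕ) = 0)) := by
    simp only [Finset.mem_filter, Finset.mem_univ, true_and]
    have h := (e 0).isLt
    simp only [Fin.val_zero] at h
    omega
  have := Finset.card_pos.mpr ⟨_, this⟩
  rw [cnt] at h0
  omega

lemma stirling2_eq_G (n k : ℕ) : stirling2 n k = G n k := by
  induction n generalizing k with
  | zero =>
    cases k with
    | zero => rw [G_zero]; rfl
    | succ m => rw [G_zero]; rfl
  | succ n ih =>
    cases k with
    | zero => rw [G_succ_zero]; rfl
    | succ m =>
      rw [G_succ_succ, ← ih (m + 1), ← ih m]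
      rfl

/-- `S(n,k)` is the number of inversion sequences `e ∈ I_n` with `|e|_0 = k` and
`|e|_j ∈ {0,1}` for all `1 ≤ j ≤ n-1`. -/
theorem stirling2_eq_card_inversion_sequences (n k : ℕ) (hn : 1 ≤ n) (hk : 1 ≤ k)
    (hkn : k ≤ n) :
    stirling2 n k = (Finset.univ.filter (fun e : (i : Fin n) → Fin ((i : ℕ) + 1) =>
      cnt e 0 = k ∧ ∀ j ∈ Finset.Icc 1 (n - 1), cnt e j ≤ 1)).card := by
  rw [stirling2_eq_G, G]
  congr 1
  ext e
  simp only [Finset.mem_filter, Finset.mem_univ, true_and]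
  constructor
  · rintro ⟨h0, hQ⟩
    refine ⟨h0, ?_⟩
    intro j hj
    simp only [Finset.mem_Icc] at hj
    exact hQ j hj.1
  · rintro ⟨h0, hQ⟩
    refine ⟨h0, ?_⟩
    intro j hj
    rcases Nat.lt_or_ge j n with h | h
    · exact hQ j (by rw [Finset.mem_Icc]; omega)
    · rw [cnt_of_ge e j h]; omega
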